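/- Let X be an infinite Hausdorff ω-Lindelöf space. Then the following are equivalent: (1) (𝔽(X), V⁺) satisfies α₂(Ω,Γ); (2) (𝔽(X), V⁺) satisfies α₃(Ω,Γ); (3) (𝔽(X), V⁺) satisfies α₄(Ω,Γ); (4) (𝔽(X), V⁺) satisfies S₁(Ω,Γ); (5) X satisfies S₁(Ω,Γ). -/

import Mathlib

open Set Filter Pointwise

universe u

/-- The selection principle `S₁(𝒜,ℬ)`: for each sequence of elements of `𝒜` one can pick one
element from each term so that the set of chosen elements belongs to `ℬ`. -/
def S1 {Y : Type u} (cA cB : Set (Set Y)) : Prop :=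
  ∀ A : ℕ → Set Y, (∀ n, A n ∈ cA) →
    ∃ b : ℕ → Y, (∀ n, b n ∈ A n) ∧ Set.range b ∈ cB

/-- `α₁(𝒜,ℬ)`: for each sequence of infinite elements of `𝒜` there is `B ∈ ℬ` such that
`Aₙ \ B` is finite for each `n`. -/
def Alpha1 {Y : Type u} (cA cB : Set (Set Y)) : Prop :=
  ∀ A : ℕ → Set Y, (∀ n, A n ∈ cA ∧ (A n).Infinite) →
    ∃ B ∈ cB, ∀ n, (A n \ B).Finite

/-- `α₂(𝒜,ℬ)`: for each sequence of infinite elements of `𝒜` there is `B ∈ ℬ` such that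
`Aₙ ∩ B` is infinite for each `n`. -/
def Alpha2 {Y : Type u} (cA cB : Set (Set Y)) : Prop :=
  ∀ A : ℕ → Set Y, (∀ n, A n ∈ cA ∧ (A n).Infinite) →
    ∃ B ∈ cB, ∀ n, (A n ∩ B).Infinite

/-- `α₃(𝒜,ℬ)`: for each sequence of infinite elements of `𝒜` there is `B ∈ ℬ` such that
`Aₙ ∩ B` is infinite for infinitely many `n`. -/
def Alpha3 {Y : Type u} (cA cB : Set (Set Y)) : Prop :=
  ∀ A : ℕ → Set Y, (∀ n, A n ∈ cA ∧ (A n).Infinite) →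
    ∃ B ∈ cB, {n : ℕ | (A n ∩ B).Infinite}.Infinite

/-- `α₄(𝒜,ℬ)`: for each sequence of infinite elements of `𝒜` there is `B ∈ ℬ` such that
`Aₙ ∩ B` is nonempty for infinitely many `n`. -/
def Alpha4 {Y : Type u} (cA cB : Set (Set Y)) : Prop :=
  ∀ A : ℕ → Set Y, (∀ n, A n ∈ cA ∧ (A n).Infinite) →
    ∃ B ∈ cB, {n : ℕ | (A n ∩ B).Nonempty}.Infinite

/-- An ω-cover: a nontrivial open cover such that every finite set lies in some member. -/
def IsOmegaCover {Y : Type u} [TopologicalSpace Y] (cU : Set (Set Y)) : Prop :=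
  (∀ U ∈ cU, IsOpen U) ∧ ⋃₀ cU = Set.univ ∧ Set.univ ∉ cU ∧
    ∀ F : Set Y, F.Finite → ∃ U ∈ cU, F ⊆ U

/-- A k-cover: a nontrivial open cover such that every compact set lies in some member. -/
def IsKCover {Y : Type u} [TopologicalSpace Y] (cU : Set (Set Y)) : Prop :=
  (∀ U ∈ cU, IsOpen U) ∧ ⋃₀ cU = Set.univ ∧ Set.univ ∉ cU ∧
    ∀ K : Set Y, IsCompact K → ∃ U ∈ cU, K ⊆ U

/-- A γ-cover: an infinite open cover such that each finite set is contained in all but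
finitely many members. -/
def IsGammaCover {Y : Type u} [TopologicalSpace Y] (cU : Set (Set Y)) : Prop :=
  (∀ U ∈ cU, IsOpen U) ∧ ⋃₀ cU = Set.univ ∧ cU.Infinite ∧
    ∀ F : Set Y, F.Finite → {U ∈ cU | ¬ F ⊆ U}.Finite

/-- A γₖ-cover: an infinite open cover such that each compact set is contained in all but
finitely many members. -/
def IsGammaKCover {Y : Type u} [TopologicalSpace Y] (cU : Set (Set Y)) : Prop :=
  (∀ U ∈ cU, IsOpen U) ∧ ⋃₀ cU = Set.univ ∧ cU.Infinite ∧
    ∀ K : Set Y, IsCompact K → {U ∈ cU | ¬ K ⊆ U}.Finite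

/-- `Ω`: the collection of ω-covers of `Y`. -/
def OmegaCovers (Y : Type u) [TopologicalSpace Y] : Set (Set (Set Y)) :=
  {cU | IsOmegaCover cU}

/-- `𝒦`: the collection of k-covers of `Y`. -/
def KCovers (Y : Type u) [TopologicalSpace Y] : Set (Set (Set Y)) :=
  {cU | IsKCover cU}

/-- `Γ`: the collection of γ-covers of `Y`. -/
def GammaCovers (Y : Type u) [TopologicalSpace Y] : Set (Set (Set Y)) :=
  {cU | IsGammaCover cU}

/-- `Γₖ`: the collection of γₖ-covers of `Y`. -/
def GammaKCovers (Y : Type u) [TopologicalSpace Y] : Set (Set (Set Y)) :=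
  {cU | IsGammaKCover cU}

/-- `Y` is ω-Lindelöf if every ω-cover contains a countable ω-cover. -/
def OmegaLindelof (Y : Type u) [TopologicalSpace Y] : Prop :=
  ∀ cU : Set (Set Y), IsOmegaCover cU →
    ∃ cV ⊆ cU, cV.Countable ∧ IsOmegaCover cV

/-- `Y` is k-Lindelöf if every k-cover contains a countable k-cover. -/
def KLindelof (Y : Type u) [TopologicalSpace Y] : Prop :=
  ∀ cU : Set (Set Y), IsKCover cU →
    ∃ cV ⊆ cU, cV.Countable ∧ IsKCover cV

/-- `Ω_y`: subsets of `Y \ {y}` having `y` in their closure. -/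
def OmegaPt {Y : Type u} [TopologicalSpace Y] (y : Y) : Set (Set Y) :=
  {A | A ⊆ {y}ᶜ ∧ y ∈ closure A}

/-- `Σ_y`: (ranges of) nontrivial sequences in `Y` converging to `y`. -/
def SigmaPt {Y : Type u} [TopologicalSpace Y] (y : Y) : Set (Set Y) :=
  {S | ∃ f : ℕ → Y, (∀ n, f n ≠ y) ∧
    Filter.Tendsto f Filter.atTop (nhds y) ∧ S = Set.range f}

/-- `2^X`: the hyperspace of closed subsets of `X`. -/
abbrev HClosed (X : Type u) [TopologicalSpace X] : Type u := {F : Set X // IsClosed F}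

/-- The upper Fell topology on `2^X`, generated by the base
`{(Kᶜ)⁺ : K nonempty compact} ∪ {univ}`. -/
instance fellTopology (X : Type u) [TopologicalSpace X] : TopologicalSpace (HClosed X) :=
  TopologicalSpace.generateFrom
    ({S | ∃ K : Set X, IsCompact K ∧ K.Nonempty ∧ S = {F : HClosed X | F.1 ⊆ Kᶜ}} ∪
      {Set.univ})

/-- `𝕂(X)`: the hyperspace of nonempty compact subsets of `X`. -/
abbrev KSp (X : Type u) [TopologicalSpace X] : Type u := {K : Set X // IsCompact K ∧ K.Nonempty}

/-- The upper Vietoris topology on `𝕂(X)`, generated by the base of sets `U⁺`, `U` open. -/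
instance upperVietorisK (X : Type u) [TopologicalSpace X] : TopologicalSpace (KSp X) :=
  TopologicalSpace.generateFrom
    {S | ∃ U : Set X, IsOpen U ∧ S = {K : KSp X | K.1 ⊆ U}}

/-- `𝔽(X)`: the hyperspace of nonempty finite subsets of `X`. -/
abbrev FSp (X : Type u) [TopologicalSpace X] : Type u := {F : Set X // F.Finite ∧ F.Nonempty}

/-- The upper Vietoris topology on `𝔽(X)`, generated by the base of sets `U⁺`, `U` open. -/
instance upperVietorisF (X : Type u) [TopologicalSpace X] : TopologicalSpace (FSp X) :=
  TopologicalSpace.generateFrom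
    {S | ∃ U : Set X, IsOpen U ∧ S = {F : FSp X | F.1 ⊆ U}}

/-- For a topological group `G` with local base `Be` at the neutral element:
`Ω(e) = {ω(U) : U ∈ Be, no nonempty finite F with F·U = G}` where
`ω(U) = {F·U : F nonempty finite}`. -/
def OmegaE {G : Type u} [Group G] (Be : Set (Set G)) : Set (Set (Set G)) :=
  {cU | ∃ U ∈ Be,
    (¬ ∃ F : Set G, F.Finite ∧ F.Nonempty ∧ F * U = Set.univ) ∧
    cU = {V | ∃ F : Set G, F.Finite ∧ F.Nonempty ∧ V = F * U}}

/-- For a topological group `G` with local base `Be` at the neutral element: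
`𝒦(e) = {k(U) : U ∈ Be, no nonempty compact K with K·U = G}` where
`k(U) = {K·U : K nonempty compact}`. -/
def KcalE {G : Type u} [Group G] [TopologicalSpace G] (Be : Set (Set G)) :
    Set (Set (Set G)) :=
  {cU | ∃ U ∈ Be,
    (¬ ∃ K : Set G, IsCompact K ∧ K.Nonempty ∧ K * U = Set.univ) ∧
    cU = {V | ∃ K : Set G, IsCompact K ∧ K.Nonempty ∧ V = K * U}}

/-- Player ONE has a winning strategy in the game `G₁(𝒜,ℬ)`: a strategy assigns to each finite
sequence of TWO's previous moves a member of `𝒜`; it is winning if for every play in which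
TWO's moves follow it, the set of TWO's moves is not in `ℬ`. -/
def OneHasWinningStrategy {Y : Type u} (cA cB : Set (Set Y)) : Prop :=
  ∃ σ : List Y → Set Y, (∀ l : List Y, σ l ∈ cA) ∧
    ∀ b : ℕ → Y, (∀ n, b n ∈ σ (List.ofFn fun i : Fin n => b i)) → Set.range b ∉ cB


section Aux

variable {Y : Type u} [TopologicalSpace Y]

namespace MyAux

theorem nonempty_of_omega {cU : Set (Set Y)} (h : IsOmegaCover cU) : Nonempty Y := by
  by_contra hc
  obtain ⟨U, hU, -⟩ := h.2.2.2 ∅ Set.finite_empty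
  apply h.2.2.1
  have : U = Set.univ := Set.eq_univ_iff_forall.2 fun x => absurd ⟨x⟩ hc
  rwa [this] at hU

theorem omega_infinite {cU : Set (Set Y)} (h : IsOmegaCover cU) : cU.Infinite := by
  have := nonempty_of_omega h
  intro hfin
  have hne : ∀ U ∈ cU, ∃ x, x ∉ U := by
    intro U hU
    by_contra hc
    push_neg at hc
    exact h.2.2.1 (by rwa [Set.eq_univ_iff_forall.2 hc] at hU)
  classical
  choose! c hc using hne
  have hFfin : (c '' cU).Finite := hfin.image c
  obtain ⟨U, hU, hsub⟩ := h.2.2.2 (c '' cU) hFfin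
  exact hc U hU (hsub ⟨U, hU, rfl⟩)

theorem omega_diff {cU E : Set (Set Y)} (h : IsOmegaCover cU) (hE : E.Finite) :
    IsOmegaCover (cU \ E) := by
  classical
  have := nonempty_of_omega h
  have hne : ∀ U ∈ cU, ∃ x, x ∉ U := by
    intro U hU
    by_contra hc
    push_neg at hc
    exact h.2.2.1 (by rwa [Set.eq_univ_iff_forall.2 hc] at hU)
  choose! c hc using hne
  have key : ∀ F : Set Y, F.Finite → ∃ U ∈ cU \ E, F ⊆ U := by
    intro F hF
    obtain ⟨U, hU, hsub⟩ := h.2.2.2 (F ∪ c '' (E ∩ cU)) (hF.union ((hE.inter_of_left cU).image c))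
    refine ⟨U, ⟨hU, fun hUE => ?_⟩, fun x hx => hsub (Or.inl hx)⟩
    exact hc U hU (hsub (Or.inr ⟨U, ⟨hUE, hU⟩, rfl⟩))
  refine ⟨fun U hU => h.1 U hU.1, ?_, fun hu => h.2.2.1 hu.1, key⟩
  apply Set.eq_univ_iff_forall.2
  intro x
  obtain ⟨U, hU, hsub⟩ := key {x} (Set.finite_singleton x)
  exact ⟨U, hU, hsub rfl⟩

/-- A γ-sequence: every finite set is eventually contained in the terms. -/
def GammaSeq (u : ℕ → Set Y) : Prop :=
  ∀ F : Set Y, F.Finite → ∀ᶠ n in Filter.atTop, F ⊆ u n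

theorem gammaSeq_range_mem {u : ℕ → Set Y} (ho : ∀ n, IsOpen (u n))
    (hne : ∀ n, u n ≠ Set.univ) (hg : GammaSeq u) : Set.range u ∈ GammaCovers Y := by
  classical
  have hY : Nonempty Y := by
    by_contra hc
    exact hne 0 (Set.eq_univ_iff_forall.2 fun x => absurd ⟨x⟩ hc)
  have hbad : ∀ F : Set Y, F.Finite → {V ∈ Set.range u | ¬ F ⊆ V}.Finite := by
    intro F hF
    obtain ⟨N, hN⟩ := Filter.eventually_atTop.1 (hg F hF)
    have : {V ∈ Set.range u | ¬ F ⊆ V} ⊆ u '' {n | n < N} := by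
      rintro V ⟨⟨n, rfl⟩, hbad⟩
      exact ⟨n, by by_contra hn; exact hbad (hN n (not_lt.1 hn)), rfl⟩
    exact ((Set.finite_Iio N).image u).subset this
  have hcov : ⋃₀ Set.range u = Set.univ := by
    apply Set.eq_univ_iff_forall.2
    intro x
    obtain ⟨n, hn⟩ := (hg {x} (Set.finite_singleton x)).exists
    exact ⟨u n, ⟨n, rfl⟩, hn rfl⟩
  have hinf : (Set.range u).Infinite := by
    intro hfin
    have hptne : ∀ V ∈ Set.range u, ∃ x, x ∉ V := by
      rintro V ⟨n, rfl⟩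
      by_contra hc
      push_neg at hc
      exact hne n (Set.eq_univ_iff_forall.2 hc)
    choose! c hc using hptne
    obtain ⟨n, hn⟩ := (hg (c '' Set.range u) (hfin.image c)).exists
    exact hc (u n) ⟨n, rfl⟩ (hn ⟨u n, ⟨n, rfl⟩, rfl⟩)
  exact ⟨fun V ⟨n, hn⟩ => hn ▸ ho n, hcov, hinf, hbad⟩

/-- Strong version of `S1(Ω,Γ)` with a per-index γ-sequence conclusion. -/
def StrongS1 (Y : Type u) [TopologicalSpace Y] : Prop :=
  ∀ 𝒰 : ℕ → Set (Set Y), (∀ n, IsOmegaCover (𝒰 n)) →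
    ∃ u : ℕ → Set Y, (∀ n, u n ∈ 𝒰 n) ∧ GammaSeq u

theorem strongS1_s1 (h : StrongS1 Y) : S1 (OmegaCovers Y) (GammaCovers Y) := by
  intro A hA
  obtain ⟨u, hu, hg⟩ := h A hA
  refine ⟨u, hu, gammaSeq_range_mem (fun n => (hA n).1 _ (hu n)) (fun n hV => ?_) hg⟩
  exact (hA n).2.2.1 (hV ▸ hu n)

theorem s1_alpha4 (h : S1 (OmegaCovers Y) (GammaCovers Y)) :
    Alpha4 (OmegaCovers Y) (GammaCovers Y) := by
  intro A hA
  obtain ⟨b, hb, hΓ⟩ := h A (fun n => (hA n).1)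
  refine ⟨Set.range b, hΓ, ?_⟩
  have : {n : ℕ | (A n ∩ Set.range b).Nonempty} = Set.univ :=
    Set.eq_univ_iff_forall.2 fun n => ⟨b n, hb n, ⟨n, rfl⟩⟩
  rw [this]
  exact Set.infinite_univ


theorem alpha4_strongS1 (hL : OmegaLindelof Y)
    (h4 : Alpha4 (OmegaCovers Y) (GammaCovers Y)) : StrongS1 Y := by
  classical
  intro 𝒰 h𝒰
  -- countable ω-subcovers
  have hsub : ∀ n, ∃ cV, cV ⊆ 𝒰 n ∧ cV.Countable ∧ IsOmegaCover cV := by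
    intro n
    obtain ⟨cV, h1, h2, h3⟩ := hL (𝒰 n) (h𝒰 n)
    exact ⟨cV, h1, h2, h3⟩
  choose 𝒱 h𝒱sub h𝒱cnt h𝒱ω using hsub
  -- the depth-≥ n intersection covers
  set W : ℕ → Set (Set Y) := fun n =>
    {V | ∃ m, n ≤ m ∧ ∃ U : ℕ → Set Y, (∀ i ≤ m, U i ∈ 𝒱 i) ∧
      V = ⋂ i ∈ Finset.range (m+1), U i} with hWdef
  have hWanti : ∀ {n m : ℕ}, n ≤ m → W m ⊆ W n := by
    rintro n m hnm V ⟨m', h1, hrest⟩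
    exact ⟨m', le_trans hnm h1, hrest⟩
  have hWkey : ∀ n, ∀ F : Set Y, F.Finite → ∃ V ∈ W n, F ⊆ V := by
    intro n F hF
    choose g hg hgF using fun i => (h𝒱ω i).2.2.2 F hF
    refine ⟨⋂ i ∈ Finset.range (n+1), g i, ⟨n, le_rfl, g, fun i _ => hg i, rfl⟩, ?_⟩
    exact Set.subset_iInter₂ fun i _ => hgF i
  have hWω : ∀ n, IsOmegaCover (W n) := by
    intro n
    refine ⟨?_, ?_, ?_, fun F hF => (hWkey n F hF).imp fun V ⟨h1, h2⟩ => ⟨h1, h2⟩⟩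
    · rintro V ⟨m, -, U, hU, rfl⟩
      exact isOpen_biInter_finset fun i hi =>
        (h𝒱ω i).1 _ (hU i (Nat.lt_succ_iff.1 (Finset.mem_range.1 hi)))
    · apply Set.eq_univ_iff_forall.2
      intro x
      obtain ⟨V, hV, hxV⟩ := hWkey n {x} (Set.finite_singleton x)
      exact ⟨V, hV, hxV rfl⟩
    · rintro ⟨m, -, U, hU, hV⟩
      apply (h𝒱ω 0).2.2.1
      have h0 : Set.univ ⊆ U 0 := by
        rw [hV]
        exact Set.biInter_subset_of_mem (Finset.mem_range.2 (Nat.succ_pos m))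
      have hU0 : U 0 = Set.univ := Set.univ_subset_iff.1 h0
      rw [← hU0]
      exact hU 0 (Nat.zero_le m)
  -- countability of ⋂ n, W n
  have hW0cnt : (W 0).Countable := by
    have h𝒱ne : ∀ i, (𝒱 i).Nonempty := by
      intro i
      obtain ⟨U, hU, -⟩ := (h𝒱ω i).2.2.2 ∅ Set.finite_empty
      exact ⟨U, hU⟩
    choose e he using fun i => (h𝒱cnt i).exists_eq_range (h𝒱ne i)
    set g : ((m : ℕ) × (Fin (m+1) → ℕ)) → Set Y := fun p =>
      ⋂ i ∈ Finset.range (p.1+1), e i (if h : i < p.1+1 then p.2 ⟨i, h⟩ else 0) with hgdef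
    apply Set.Countable.mono _ (Set.countable_range g)
    rintro V ⟨m, -, U, hU, rfl⟩
    have hrep : ∀ i, ∃ k, i ≤ m → e i k = U i := by
      intro i
      by_cases hi : i ≤ m
      · have : U i ∈ Set.range (e i) := (he i) ▸ hU i hi
        obtain ⟨k, hk⟩ := this
        exact ⟨k, fun _ => hk⟩
      · exact ⟨0, fun h => absurd h hi⟩
    choose σ hσ using hrep
    refine ⟨⟨m, fun j => σ j⟩, ?_⟩
    apply Set.iInter_congr
    intro i
    apply Set.iInter_congr
    intro hi
    have him : i < m + 1 := Finset.mem_range.1 hi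
    rw [dif_pos him]
    exact hσ i (Nat.lt_succ_iff.1 him)
  have hDcnt : (⋂ n, W n).Countable :=
    Set.Countable.mono (Set.iInter_subset W 0) hW0cnt
  -- exhaustion of the troublemakers
  have hY : Nonempty Y := nonempty_of_omega (h𝒰 0)
  obtain ⟨f, hf⟩ : ∃ f : ℕ → Set Y, (⋂ n, W n) ⊆ Set.range f := by
    rcases (⋂ n, W n).eq_empty_or_nonempty with hD | hD
    · exact ⟨fun _ => ∅, by rw [hD]; exact Set.empty_subset _⟩
    · obtain ⟨f, hf⟩ := hDcnt.exists_eq_range hD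
      exact ⟨f, hf.subset⟩
  set E : ℕ → Set (Set Y) := fun n => f '' {k | k < n} with hEdef
  have hEfin : ∀ n, (E n).Finite := fun n => (Set.finite_Iio n).image f
  set Ws : ℕ → Set (Set Y) := fun n => W n \ E n with hWsdef
  have hWsω : ∀ n, IsOmegaCover (Ws n) := fun n => omega_diff (hWω n) (hEfin n)
  -- each set lies in only finitely many Ws n
  have hfib : ∀ V : Set Y, {n | V ∈ Ws n}.Finite := by
    intro V
    by_cases hV : V ∈ ⋂ n, W n
    · obtain ⟨k, hk⟩ := hf hV
      apply (Set.finite_Iic k).subset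
      intro n hn
      simp only [Set.mem_setOf_eq, hWsdef, Set.mem_diff] at hn
      simp only [Set.mem_Iic]
      by_contra hnk
      push_neg at hnk
      exact hn.2 ⟨k, by simp only [Set.mem_setOf_eq]; omega, hk⟩
    · obtain ⟨n₀, hn₀⟩ : ∃ n₀, V ∉ W n₀ := by
        by_contra hc
        push_neg at hc
        exact hV (Set.mem_iInter.2 hc)
      apply (Set.finite_Iio n₀).subset
      intro n hn
      simp only [Set.mem_setOf_eq, hWsdef, Set.mem_diff] at hn
      by_contra hnn
      exact hn₀ (hWanti (not_lt.1 hnn) hn.1)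
  -- apply α₄
  obtain ⟨B, hBΓ, hS⟩ := h4 Ws (fun n => ⟨hWsω n, omega_infinite (hWsω n)⟩)
  have hBγ : IsGammaCover B := hBΓ
  -- choose indices and witnesses
  have hnj : ∀ j : ℕ, ∃ n, ((Ws n ∩ B).Nonempty) ∧ j < n := by
    intro j
    obtain ⟨n, hn, hjn⟩ := hS.exists_gt j
    exact ⟨n, hn, hjn⟩
  choose nj hWit hjlt using hnj
  choose WW hWWmem hWWB using fun j => hWit j
  -- extract representations
  have hrep : ∀ j, ∃ m, nj j ≤ m ∧ ∃ U : ℕ → Set Y, (∀ i ≤ m, U i ∈ 𝒱 i) ∧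
      WW j = ⋂ i ∈ Finset.range (m+1), U i := fun j => (hWWmem j).1
  choose m hm U hU hVeq using hrep
  refine ⟨fun j => U j j, fun j => h𝒱sub j (hU j j (le_of_lt (lt_of_lt_of_le (hjlt j) (hm j)))), ?_⟩
  -- the γ-sequence property
  intro F hF
  have hTfin : {V ∈ B | ¬ F ⊆ V}.Finite := hBγ.2.2.2 F hF
  have hWWsub : ∀ j, WW j ⊆ U j j := by
    intro j
    rw [hVeq j]
    exact Set.biInter_subset_of_mem
      (Finset.mem_range.2 (lt_of_lt_of_le (hjlt j) (Nat.le_succ_of_le (hm j))))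
  have hbadfin : {j | ¬ F ⊆ WW j}.Finite := by
    have hsub2 : {j | ¬ F ⊆ WW j} ⊆ ⋃ V ∈ {V ∈ B | ¬ F ⊆ V}, {j | WW j = V} := fun j hj =>
      Set.mem_biUnion ⟨hWWB j, hj⟩ rfl
    refine Set.Finite.subset (Set.Finite.biUnion hTfin fun V _ => ?_) hsub2
    obtain ⟨N, hN⟩ := (hfib V).bddAbove
    apply (Set.finite_Iic N).subset
    intro j hj
    have hmem : nj j ∈ {n | V ∈ Ws n} := by
      simp only [Set.mem_setOf_eq] at hj
      rw [← hj]
      exact hWWmem j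
    simp only [Set.mem_Iic]
    exact le_trans (le_of_lt (hjlt j)) (hN hmem)
  rw [← Nat.cofinite_eq_atTop]
  apply Filter.Eventually.mono hbadfin.eventually_cofinite_notMem
  intro j hj
  have hFW : F ⊆ WW j := by
    by_contra hc
    exact hj hc
  exact hFW.trans (hWWsub j)


theorem omega_exists_distinct {cU : Set (Set Y)} (h : IsOmegaCover cU) (F : Set Y)
    (hF : F.Finite) : ∀ k : ℕ, ∃ S : Fin k → Set Y, Function.Injective S ∧
      ∀ j, S j ∈ cU ∧ F ⊆ S j := by
  intro k
  induction k with
  | zero => exact ⟨fun j => j.elim0, fun j => j.elim0, fun j => j.elim0⟩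
  | succ k ih =>
    obtain ⟨S, hSinj, hS⟩ := ih
    obtain ⟨U, hU, hFU⟩ := (omega_diff h (Set.finite_range S)).2.2.2 F hF
    refine ⟨Fin.cons U S, Fin.cons_injective_of_injective hU.2 hSinj, fun j => ?_⟩
    refine Fin.cases ?_ ?_ j
    · exact ⟨hU.1, hFU⟩
    · intro i
      simpa using hS i

theorem infinite_of_arbitrarily_large {α : Type u} {A : Set α}
    (h : ∀ i : ℕ, ∃ t : Finset α, ↑t ⊆ A ∧ i ≤ t.card) : A.Infinite := by
  intro hfin
  obtain ⟨t, hsub, hcard⟩ := h (hfin.toFinset.card + 1)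
  have h1 : t ⊆ hfin.toFinset := fun x hx => hfin.mem_toFinset.2 (hsub hx)
  have h2 := Finset.card_le_card h1
  omega

section FSpAux

variable {X : Type u} [TopologicalSpace X]

/-- `U⁺` inside `𝔽(X)`. -/
def plusF (U : Set X) : Set (FSp X) := {F | (F : {F : Set X // F.Finite ∧ F.Nonempty}).1 ⊆ U}

theorem mem_plusF {U : Set X} {F : FSp X} : F ∈ plusF U ↔ F.1 ⊆ U := Iff.rfl

/-- The singleton as an element of `𝔽(X)`. -/
def singF (x : X) : FSp X := ⟨{x}, Set.finite_singleton x, Set.singleton_nonempty x⟩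

theorem plusF_isOpen {U : Set X} (hU : IsOpen U) : IsOpen (plusF U) :=
  TopologicalSpace.isOpen_generateFrom_of_mem ⟨U, hU, rfl⟩

theorem plusF_injective : Function.Injective (plusF (X := X)) := by
  intro U V h
  ext x
  constructor
  · intro hx
    exact (mem_plusF.1 (h ▸ (mem_plusF.2 (Set.singleton_subset_iff.2 hx) : singF x ∈ plusF U)))
      (Set.mem_singleton x)
  · intro hx
    exact (mem_plusF.1 (h ▸ (mem_plusF.2 (Set.singleton_subset_iff.2 hx) : singF x ∈ plusF V) :
      singF x ∈ plusF U)) (Set.mem_singleton x)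

theorem plusF_eq_univ {U : Set X} (h : plusF U = Set.univ) : U = Set.univ := by
  apply Set.eq_univ_iff_forall.2
  intro x
  have : singF x ∈ plusF U := h ▸ Set.mem_univ _
  exact this rfl

/-- Basis property of the upper Vietoris topology on `𝔽(X)`. -/
theorem exists_plusF_subset {S : Set (FSp X)} (hS : IsOpen S) :
    ∀ F ∈ S, ∃ U : Set X, IsOpen U ∧ F ∈ plusF U ∧ plusF U ⊆ S := by
  have hgen : TopologicalSpace.GenerateOpen
      {S | ∃ U : Set X, IsOpen U ∧ S = {F : FSp X | F.1 ⊆ U}} S := hS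
  clear hS
  induction hgen with
  | basic s hs =>
    obtain ⟨U, hU, rfl⟩ := hs
    exact fun F hF => ⟨U, hU, hF, fun G hG => hG⟩
  | univ => exact fun F _ => ⟨Set.univ, isOpen_univ, Set.subset_univ _, Set.subset_univ _⟩
  | inter s t _ _ ihs iht =>
    rintro F ⟨hFs, hFt⟩
    obtain ⟨U, hU, hFU, hUs⟩ := ihs F hFs
    obtain ⟨V, hV, hFV, hVt⟩ := iht F hFt
    refine ⟨U ∩ V, hU.inter hV, Set.subset_inter hFU hFV, fun G hG => ?_⟩
    exact ⟨hUs fun x hx => (hG hx).1, hVt fun x hx => (hG hx).2⟩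
  | sUnion 𝒮 _ ih =>
    rintro F ⟨T, hT, hFT⟩
    obtain ⟨U, hU, hFU, hUT⟩ := ih T hT F hFT
    exact ⟨U, hU, hFU, fun G hG => ⟨T, hT, hUT hG⟩⟩

/-- Lift of an ω-cover of `X` to an ω-cover of `𝔽(X)`. -/
theorem omega_lift {cU : Set (Set X)} (h : IsOmegaCover cU) :
    IsOmegaCover (plusF '' cU) := by
  have key : ∀ 𝔉 : Set (FSp X), 𝔉.Finite → ∃ V ∈ plusF '' cU, 𝔉 ⊆ V := by
    intro 𝔉 h𝔉
    have hfin : (⋃ G ∈ 𝔉, (G : FSp X).1).Finite := h𝔉.biUnion fun G _ => G.2.1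
    obtain ⟨U, hU, hsub⟩ := h.2.2.2 _ hfin
    refine ⟨plusF U, ⟨U, hU, rfl⟩, fun G hG => ?_⟩
    exact fun x hx => hsub (Set.mem_biUnion hG hx)
  refine ⟨?_, ?_, ?_, key⟩
  · rintro V ⟨U, hU, rfl⟩
    exact plusF_isOpen (h.1 U hU)
  · apply Set.eq_univ_iff_forall.2
    intro G
    obtain ⟨V, hV, hsub⟩ := key {G} (Set.finite_singleton G)
    exact ⟨V, hV, hsub rfl⟩
  · rintro ⟨U, hU, hUuniv⟩
    exact h.2.2.1 (plusF_eq_univ hUuniv ▸ hU)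

/-- The set of open sets of `X` whose plus-set is inside a member of a family. -/
def downCover (𝒞 : Set (Set (FSp X))) : Set (Set X) :=
  {U | IsOpen U ∧ ∃ S ∈ 𝒞, plusF U ⊆ S}

theorem downCover_omega [Nonempty X] {𝒞 : Set (Set (FSp X))} (h : IsOmegaCover 𝒞) :
    IsOmegaCover (downCover 𝒞) := by
  obtain ⟨x₀⟩ := ‹Nonempty X›
  have key : ∀ F : Set X, F.Finite → ∃ U ∈ downCover 𝒞, F ⊆ U := by
    intro F hF
    set G : FSp X := ⟨insert x₀ F, hF.insert x₀, Set.insert_nonempty x₀ F⟩ with hGdef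
    obtain ⟨S, hS, hGS⟩ := h.2.2.2 {G} (Set.finite_singleton G)
    obtain ⟨U, hU, hGU, hUS⟩ := exists_plusF_subset (h.1 S hS) G (hGS rfl)
    refine ⟨U, ⟨hU, S, hS, hUS⟩, ?_⟩
    exact (Set.subset_insert x₀ F).trans hGU
  refine ⟨fun U hU => hU.1, ?_, ?_, key⟩
  · apply Set.eq_univ_iff_forall.2
    intro x
    obtain ⟨U, hU, hsub⟩ := key {x} (Set.finite_singleton x)
    exact ⟨U, hU, hsub rfl⟩
  · rintro ⟨-, S, hS, hsub⟩
    have hpu : plusF (Set.univ : Set X) = Set.univ :=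
      Set.eq_univ_iff_forall.2 fun G x _ => Set.mem_univ x
    rw [hpu] at hsub
    exact h.2.2.1 (Set.univ_subset_iff.1 hsub ▸ hS)

theorem omegaLindelof_FSp [Nonempty X] (hL : OmegaLindelof X) : OmegaLindelof (FSp X) := by
  classical
  intro 𝒞 h𝒞
  obtain ⟨x₀⟩ := ‹Nonempty X›
  obtain ⟨𝒱, h𝒱sub, h𝒱cnt, h𝒱ω⟩ := hL (downCover 𝒞) (downCover_omega h𝒞)
  have hch : ∀ U ∈ 𝒱, ∃ S ∈ 𝒞, plusF U ⊆ S := fun U hU => (h𝒱sub hU).2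
  choose! c hc1 hc2 using hch
  have hsub : c '' 𝒱 ⊆ 𝒞 := by rintro _ ⟨U, hU, rfl⟩; exact hc1 U hU
  have key : ∀ 𝔉 : Set (FSp X), 𝔉.Finite → ∃ V ∈ c '' 𝒱, 𝔉 ⊆ V := by
    intro 𝔉 h𝔉
    have hfin : (insert x₀ (⋃ G ∈ 𝔉, (G : FSp X).1)).Finite :=
      (h𝔉.biUnion fun G _ => G.2.1).insert x₀
    obtain ⟨U, hU, hFU⟩ := (h𝒱ω).2.2.2 _ hfin
    refine ⟨c U, ⟨U, hU, rfl⟩, fun G hG => hc2 U hU ?_⟩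
    exact fun x hx => hFU (Set.mem_insert_of_mem x₀ (Set.mem_biUnion hG hx))
  refine ⟨c '' 𝒱, hsub, h𝒱cnt.image c, ?_, ?_, ?_, key⟩
  · exact fun V hV => h𝒞.1 V (hsub hV)
  · apply Set.eq_univ_iff_forall.2
    intro G
    obtain ⟨V, hV, hGV⟩ := key {G} (Set.finite_singleton G)
    exact ⟨V, hV, hGV rfl⟩
  · exact fun hu => h𝒞.2.2.1 (hsub hu)

theorem s1_transfer (h : S1 (OmegaCovers (FSp X)) (GammaCovers (FSp X))) :
    S1 (OmegaCovers X) (GammaCovers X) := by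
  classical
  intro A hA
  obtain ⟨b, hb, hΓ⟩ := h (fun n => plusF '' A n) (fun n => omega_lift (hA n))
  have hex : ∀ n, ∃ u ∈ A n, plusF u = b n := fun n => hb n
  choose v hv hpv using hex
  refine ⟨v, hv, ?_⟩
  have hΓ' : IsGammaCover (Set.range b) := hΓ
  have hrange : Set.range b = plusF '' Set.range v := by
    ext V
    constructor
    · rintro ⟨n, rfl⟩; exact ⟨v n, ⟨n, rfl⟩, hpv n⟩
    · rintro ⟨-, ⟨n, rfl⟩, rfl⟩; exact ⟨n, (hpv n).symm⟩
  refine ⟨?_, ?_, ?_, ?_⟩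
  · rintro U ⟨n, rfl⟩
    exact (hA n).1 _ (hv n)
  · apply Set.eq_univ_iff_forall.2
    intro x
    have : singF x ∈ ⋃₀ Set.range b := hΓ'.2.1 ▸ Set.mem_univ _
    obtain ⟨-, ⟨n, rfl⟩, hmem⟩ := this
    rw [← hpv n] at hmem
    exact ⟨v n, ⟨n, rfl⟩, hmem (Set.mem_singleton x)⟩
  · intro hfin
    rw [hrange] at hΓ'
    exact hΓ'.2.2.1 (hfin.image plusF)
  · intro F hF
    rcases F.eq_empty_or_nonempty with rfl | hFne
    · apply Set.Finite.subset Set.finite_empty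
      rintro V ⟨-, hV⟩
      exact hV (Set.empty_subset V)
    · set G : FSp X := ⟨F, hF, hFne⟩ with hGdef
      have htarget : {V ∈ Set.range b | ¬ ({G} : Set (FSp X)) ⊆ V}.Finite :=
        hΓ'.2.2.2 {G} (Set.finite_singleton G)
      have himg : plusF '' {V ∈ Set.range v | ¬ F ⊆ V} ⊆
          {V ∈ Set.range b | ¬ ({G} : Set (FSp X)) ⊆ V} := by
        rintro - ⟨V, ⟨⟨n, rfl⟩, hbad⟩, rfl⟩
        refine ⟨⟨n, (hpv n).symm⟩, fun hc => hbad ?_⟩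
        exact hc (Set.mem_singleton G)
      exact Set.Finite.of_finite_image (htarget.subset himg)
        (plusF_injective.injOn)

theorem strongS1_alpha2F [Nonempty X] (hst : StrongS1 X) :
    Alpha2 (OmegaCovers (FSp X)) (GammaCovers (FSp X)) := by
  classical
  intro 𝒞 h𝒞
  obtain ⟨x₀⟩ := ‹Nonempty X›
  set 𝒰 : ℕ → Set (Set X) := fun k =>
    {U | IsOpen U ∧ ∃ S : Fin (k.unpair.2 + 1) → Set (FSp X), Function.Injective S ∧
      ∀ j, S j ∈ 𝒞 k.unpair.1 ∧ plusF U ⊆ S j} with h𝒰def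
  have h𝒰ω : ∀ k, IsOmegaCover (𝒰 k) := by
    intro k
    have key : ∀ F : Set X, F.Finite → ∃ U ∈ 𝒰 k, F ⊆ U := by
      intro F hF
      set G : FSp X := ⟨insert x₀ F, hF.insert x₀, Set.insert_nonempty x₀ F⟩ with hGdef
      obtain ⟨S, hSinj, hS⟩ := omega_exists_distinct (h𝒞 k.unpair.1).1 {G}
        (Set.finite_singleton G) (k.unpair.2 + 1)
      have hO : IsOpen (⋂ j, S j) :=
        isOpen_iInter_of_finite fun j => (h𝒞 k.unpair.1).1.1 _ (hS j).1
      have hGO : G ∈ ⋂ j, S j := Set.mem_iInter.2 fun j => (hS j).2 (Set.mem_singleton G)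
      obtain ⟨U, hUopen, hGU, hUsub⟩ := exists_plusF_subset hO G hGO
      refine ⟨U, ⟨hUopen, S, hSinj, fun j => ⟨(hS j).1, hUsub.trans (Set.iInter_subset S j)⟩⟩, ?_⟩
      exact (Set.subset_insert x₀ F).trans hGU
    refine ⟨fun U hU => hU.1, ?_, ?_, key⟩
    · apply Set.eq_univ_iff_forall.2
      intro x
      obtain ⟨U, hU, hxU⟩ := key {x} (Set.finite_singleton x)
      exact ⟨U, hU, hxU rfl⟩
    · rintro ⟨-, S, -, hj⟩
      have hpu : plusF (Set.univ : Set X) = Set.univ :=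
        Set.eq_univ_iff_forall.2 fun G x _ => Set.mem_univ x
      have : S 0 = Set.univ := Set.univ_subset_iff.1 (hpu ▸ (hj 0).2)
      exact (h𝒞 k.unpair.1).1.2.2.1 (this ▸ (hj 0).1)
  obtain ⟨u, hu, hγ⟩ := hst 𝒰 h𝒰ω
  choose Sf hSfinj hSf using fun k => (hu k).2
  set B : Set (Set (FSp X)) := ⋃ k, Set.range (Sf k) with hBdef
  have hinter : ∀ n, (𝒞 n ∩ B).Infinite := by
    intro n
    apply infinite_of_arbitrarily_large
    intro i
    set k := Nat.pair n i with hkdef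
    have hk1 : k.unpair.1 = n := by rw [hkdef, Nat.unpair_pair]
    have hk2 : k.unpair.2 = i := by rw [hkdef, Nat.unpair_pair]
    refine ⟨Finset.univ.image fun j : Fin (k.unpair.2 + 1) => Sf k j, ?_, ?_⟩
    · intro V hV
      obtain ⟨j, -, rfl⟩ := Finset.mem_image.1 hV
      refine ⟨?_, Set.mem_iUnion.2 ⟨k, j, rfl⟩⟩
      rw [← hk1]
      exact (hSf k j).1
    · rw [Finset.card_image_of_injective _ (hSfinj k), Finset.card_univ, Fintype.card_fin, hk2]
      omega
  refine ⟨B, ?_, hinter⟩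
  refine ⟨?_, ?_, ?_, ?_⟩
  · rintro V ⟨-, ⟨k, rfl⟩, j, rfl⟩
    exact (h𝒞 k.unpair.1).1.1 _ (hSf k j).1
  · apply Set.eq_univ_iff_forall.2
    intro G
    obtain ⟨N, hN⟩ := Filter.eventually_atTop.1 (hγ G.1 G.2.1)
    refine ⟨Sf N 0, Set.mem_iUnion.2 ⟨N, 0, rfl⟩, ?_⟩
    exact (hSf N 0).2 (hN N le_rfl)
  · exact ((hinter 0).mono Set.inter_subset_right)
  · intro 𝔉 h𝔉
    have hFfin : (⋃ G ∈ 𝔉, (G : FSp X).1).Finite := h𝔉.biUnion fun G _ => G.2.1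
    obtain ⟨N, hN⟩ := Filter.eventually_atTop.1 (hγ _ hFfin)
    have hbadsub : {V ∈ B | ¬ 𝔉 ⊆ V} ⊆ ⋃ k ∈ Set.Iio N, Set.range (Sf k) := by
      rintro V ⟨hVB, hbad⟩
      obtain ⟨-, ⟨k, rfl⟩, j, rfl⟩ := hVB
      refine Set.mem_biUnion (show k ∈ Set.Iio N from ?_) ⟨j, rfl⟩
      by_contra hk
      apply hbad
      intro G hG
      apply (hSf k j).2
      intro x hx
      exact hN k (not_lt.1 hk) (Set.mem_biUnion hG hx)
    exact ((Set.finite_Iio N).biUnion fun k _ => Set.finite_range (Sf k)).subset hbadsub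

end FSpAux

end MyAux



end Aux

/-- Theorem: for an ω-Lindelöf space `X`, the properties `α₂(Ω,Γ)`, `α₃(Ω,Γ)`, `α₄(Ω,Γ)`,
`S₁(Ω,Γ)` of `(𝔽(X), V⁺)` and `S₁(Ω,Γ)` of `X` are all equivalent. -/
theorem stmt14 (X : Type u) [TopologicalSpace X] [T2Space X] [Infinite X]
    (hL : OmegaLindelof X) :
    [Alpha2 (OmegaCovers (FSp X)) (GammaCovers (FSp X)),
     Alpha3 (OmegaCovers (FSp X)) (GammaCovers (FSp X)),
     Alpha4 (OmegaCovers (FSp X)) (GammaCovers (FSp X)),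
     S1 (OmegaCovers (FSp X)) (GammaCovers (FSp X)),
     S1 (OmegaCovers X) (GammaCovers X)].TFAE := by
  tfae_have 1 → 2 := by
    intro h A hA
    obtain ⟨B, hB, h2⟩ := h A hA
    refine ⟨B, hB, ?_⟩
    have heq : {n : ℕ | (A n ∩ B).Infinite} = Set.univ := Set.eq_univ_iff_forall.2 h2
    rw [heq]
    exact Set.infinite_univ
  tfae_have 2 → 3 := by
    intro h A hA
    obtain ⟨B, hB, h2⟩ := h A hA
    exact ⟨B, hB, h2.mono fun n hn => hn.nonempty⟩
  tfae_have 3 → 4 := fun h =>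
    MyAux.strongS1_s1 (MyAux.alpha4_strongS1 (MyAux.omegaLindelof_FSp hL) h)
  tfae_have 4 → 5 := MyAux.s1_transfer
  tfae_have 5 → 1 := fun h =>
    MyAux.strongS1_alpha2F (MyAux.alpha4_strongS1 hL (MyAux.s1_alpha4 h))
  tfae_finish
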